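/- Let X = ∑_{x} J_x be a sum of indicator random variables, and let I be an event such that conditioned on I (and on any fixed values of auxiliary query hash values), for every fixed finite set S the variables (J_x)_{x∈S} restricted to I are dominated by independent Bernoulli variables with parameters p_x. If μ = ∑_x p_x, then for any δ > 0, Pr[X ≥ (1+δ)μ ∧ I] ≤ (e^δ/(1+δ)^{1+δ})^μ. -/

import Mathlib

open MeasureTheory

/-- Weighted covering lemma for (outer) measures: if on `B` the weighted indicators of the
(arbitrary) sets `A i` sum to at least `c0`, then `c0 * P B ≤ ∑ i, c i * P (A i)`. -/
lemma weighted_cover_bound {Ω : Type*} [MeasurableSpace Ω] (P : Measure Ω)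
    {η : Type*} [Fintype η] (A : η → Set Ω) (c : η → ENNReal) (B : Set Ω) (c0 : ENNReal)
    (h : ∀ ω ∈ B, c0 ≤ ∑ i, (A i).indicator (fun _ => c i) ω) :
    c0 * P B ≤ ∑ i, c i * P (A i) := by
  set H : η → Set Ω := fun i => toMeasurable P (A i) with hH
  have hHm : ∀ i, MeasurableSet (H i) := fun i => measurableSet_toMeasurable P (A i)
  set f : Ω → ENNReal := fun ω => ∑ i, (H i).indicator (fun _ => c i) ω with hf
  have hfm : Measurable f :=
    Finset.measurable_sum _ (fun i _ => measurable_const.indicator (hHm i))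
  set D : Set Ω := {ω | c0 ≤ f ω} with hD
  have hDm : MeasurableSet D := measurableSet_le measurable_const hfm
  have hBD : B ⊆ D := by
    intro ω hω
    refine le_trans (h ω hω) ?_
    refine Finset.sum_le_sum fun i _ => ?_
    exact Set.indicator_le_indicator_of_subset (subset_toMeasurable P (A i))
      (fun _ => zero_le) ω
  calc c0 * P B ≤ c0 * P D := by
        exact mul_le_mul_right (measure_mono hBD) c0
    _ = ∫⁻ _ω in D, c0 ∂P := (setLIntegral_const D c0).symm
    _ ≤ ∫⁻ ω in D, f ω ∂P := setLIntegral_mono hfm (fun ω hω => hω)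
    _ ≤ ∫⁻ ω, f ω ∂P := setLIntegral_le_lintegral _ _
    _ = ∑ i, c i * P (H i) := by
        rw [lintegral_finset_sum _ (fun i _ => measurable_const.indicator (hHm i))]
        congr 1
        funext i
        exact lintegral_indicator_const (hHm i) (c i)
    _ = ∑ i, c i * P (A i) := by
        simp only [hH, measure_toMeasurable]

/-- Chernoff upper tail bound restricted to an event `I`: if for every fixed set `S`,
`Pr[(∀ x ∈ S, J_x) ∧ I] ≤ ∏_{x∈S} p_x`, then for `μ = ∑ p_x` and `δ > 0`,
`Pr[X ≥ (1+δ)μ ∧ I] ≤ (e^δ/(1+δ)^{1+δ})^μ` where `X = ∑ 1_{J_x}`. -/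
theorem stmt14 {Ω : Type*} [MeasurableSpace Ω] (P : Measure Ω)
    [IsProbabilityMeasure P] {ι : Type*} [Fintype ι]
    (J : ι → Set Ω) (I : Set Ω) (p : ι → ℝ)
    (hp : ∀ x, p x ∈ Set.Icc (0 : ℝ) 1)
    (hmom : ∀ S : Finset ι, (P ((⋂ x ∈ S, J x) ∩ I)).toReal ≤ ∏ x ∈ S, p x)
    (δ : ℝ) (hδ : 0 < δ) :
    (P ({ω | (1 + δ) * (∑ x, p x)
          ≤ ∑ x, (J x).indicator (fun _ => (1 : ℝ)) ω} ∩ I)).toReal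
      ≤ (Real.exp δ / (1 + δ) ^ (1 + δ)) ^ (∑ x, p x) := by
  classical
  set μ : ℝ := ∑ x, p x with hμ
  have hμ0 : 0 ≤ μ := Finset.sum_nonneg fun x _ => (hp x).1
  have h1δ : (1 : ℝ) < 1 + δ := by linarith
  have h1δ0 : (0 : ℝ) < 1 + δ := by linarith
  set B : Set Ω :=
    {ω | (1 + δ) * μ ≤ ∑ x, (J x).indicator (fun _ => (1 : ℝ)) ω} ∩ I with hB
  set A : Finset ι → Set Ω := fun S => (⋂ x ∈ S, J x) ∩ I with hA
  set c : Finset ι → ENNReal := fun S => ENNReal.ofReal (δ ^ S.card) with hc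
  set c0 : ENNReal := ENNReal.ofReal ((1 + δ) ^ ((1 + δ) * μ)) with hc0
  -- pointwise covering bound
  have hcov : ∀ ω ∈ B, c0 ≤ ∑ S : Finset ι, (A S).indicator (fun _ => c S) ω := by
    intro ω hω
    obtain ⟨hω1, hω2⟩ := hω
    set T : Finset ι := Finset.univ.filter (fun x => ω ∈ J x) with hT
    have hcount : ∑ x, (J x).indicator (fun _ => (1 : ℝ)) ω = (T.card : ℝ) := by
      simp [hT, Set.indicator_apply, Finset.sum_boole]
    have hTk : (1 + δ) * μ ≤ (T.card : ℝ) := by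
      have := hω1
      simp only [Set.mem_setOf_eq] at this
      rw [hcount] at this
      exact this
    -- restrict the sum to subsets of T, where the indicator equals c S
    have hsub : ∑ S ∈ T.powerset, c S
        ≤ ∑ S : Finset ι, (A S).indicator (fun _ => c S) ω := by
      have h1 : ∑ S ∈ T.powerset, c S
          = ∑ S ∈ T.powerset, (A S).indicator (fun _ => c S) ω := by
        refine Finset.sum_congr rfl fun S hS => ?_
        rw [Finset.mem_powerset] at hS
        have hmem : ω ∈ A S := by
          refine ⟨Set.mem_iInter₂.2 fun x hx => ?_, hω2⟩
          have : x ∈ T := hS hx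
          simpa [hT] using this
        rw [Set.indicator_of_mem hmem]
      rw [h1]
      exact Finset.sum_le_sum_of_subset_of_nonneg (Finset.subset_univ _)
        (fun _ _ _ => zero_le)
    refine le_trans ?_ hsub
    -- ∑_{S ⊆ T} δ^|S| = (1+δ)^|T| ≥ (1+δ)^((1+δ)μ)
    have hbin : ∑ S ∈ T.powerset, δ ^ S.card = (1 + δ) ^ T.card := by
      have := Finset.prod_add (fun _ : ι => δ) (fun _ : ι => (1 : ℝ)) T
      simp only [Finset.prod_const, Finset.prod_const_one, one_pow, mul_one] at this
      rw [add_comm 1 δ]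
      exact this.symm
    have hsum : ∑ S ∈ T.powerset, c S = ENNReal.ofReal ((1 + δ) ^ T.card) := by
      rw [hc]
      rw [← ENNReal.ofReal_sum_of_nonneg (fun S _ => pow_nonneg hδ.le _), hbin]
    rw [hsum, hc0]
    apply ENNReal.ofReal_le_ofReal
    calc (1 + δ) ^ ((1 + δ) * μ) ≤ (1 + δ) ^ (T.card : ℝ) := by
          exact Real.rpow_le_rpow_of_exponent_le h1δ.le hTk
      _ = (1 + δ) ^ T.card := by
          rw [Real.rpow_natCast]
  have hkey := weighted_cover_bound P A c B c0 hcov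
  -- convert to reals
  have hPBfin : P B ≠ ⊤ := measure_ne_top P B
  have hAfin : ∀ S : Finset ι, P (A S) ≠ ⊤ := fun S => measure_ne_top P (A S)
  have hrhs_fin : (∑ S : Finset ι, c S * P (A S)) ≠ ⊤ := by
    refine (ENNReal.sum_lt_top.2 fun S _ => ?_).ne
    exact ENNReal.mul_lt_top ENNReal.ofReal_lt_top (measure_lt_top P _)
  have hreal : (1 + δ) ^ ((1 + δ) * μ) * (P B).toReal
      ≤ ∑ S : Finset ι, δ ^ S.card * (P (A S)).toReal := by
    have := ENNReal.toReal_mono hrhs_fin hkey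
    rw [ENNReal.toReal_mul, ENNReal.toReal_sum (fun S _ => ?_)] at this
    · rw [hc0, ENNReal.toReal_ofReal (Real.rpow_nonneg h1δ0.le _)] at this
      refine le_trans this ?_
      refine Finset.sum_le_sum fun S _ => ?_
      rw [ENNReal.toReal_mul, hc, ENNReal.toReal_ofReal (pow_nonneg hδ.le _)]
    · exact ENNReal.mul_ne_top ENNReal.ofReal_ne_top (hAfin S)
  -- bound the moment sum
  have hmomsum : ∑ S : Finset ι, δ ^ S.card * (P (A S)).toReal ≤ Real.exp (δ * μ) := by
    have step1 : ∑ S : Finset ι, δ ^ S.card * (P (A S)).toReal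
        ≤ ∑ S : Finset ι, δ ^ S.card * ∏ x ∈ S, p x := by
      refine Finset.sum_le_sum fun S _ => ?_
      exact mul_le_mul_of_nonneg_left (hmom S) (pow_nonneg hδ.le _)
    have step2 : ∑ S : Finset ι, δ ^ S.card * ∏ x ∈ S, p x
        = ∏ x, (1 + δ * p x) := by
      have := Finset.prod_add (fun x : ι => δ * p x) (fun _ : ι => (1 : ℝ))
        (Finset.univ : Finset ι)
      simp only [Finset.prod_const_one, mul_one, Finset.powerset_univ] at this
      calc ∑ S : Finset ι, δ ^ S.card * ∏ x ∈ S, p x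
          = ∑ S : Finset ι, ∏ x ∈ S, δ * p x := by
            refine Finset.sum_congr rfl fun S _ => ?_
            rw [Finset.prod_mul_distrib, Finset.prod_const]
        _ = ∏ x, (δ * p x + 1) := this.symm
        _ = ∏ x, (1 + δ * p x) := Finset.prod_congr rfl fun x _ => by ring
    have step3 : ∏ x, (1 + δ * p x) ≤ Real.exp (δ * μ) := by
      rw [hμ, Finset.mul_sum, Real.exp_sum]
      refine Finset.prod_le_prod (fun x _ => ?_) fun x _ => ?_
      · have : 0 ≤ δ * p x := mul_nonneg hδ.le (hp x).1
        linarith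
      · have := Real.add_one_le_exp (δ * p x)
        linarith
    linarith
  -- final algebra
  have hpow_pos : (0 : ℝ) < (1 + δ) ^ ((1 + δ) * μ) := Real.rpow_pos_of_pos h1δ0 _
  have hfinal : (P B).toReal ≤ Real.exp (δ * μ) / (1 + δ) ^ ((1 + δ) * μ) := by
    rw [le_div_iff₀ hpow_pos, mul_comm]
    exact le_trans hreal hmomsum
  refine le_trans hfinal (le_of_eq ?_)
  rw [Real.div_rpow (Real.exp_nonneg δ) (Real.rpow_nonneg h1δ0.le _),
    ← Real.exp_mul δ μ, ← Real.rpow_mul h1δ0.le]
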